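/- Let G : [a,b] → ℝ be positive and monotonic and F : [a,b] → ℝ be twice continuously differentiable with F''(t) ≥ r > 0 (or F''(t) ≤ −r < 0) throughout [a,b]. Then |∫_a^b G(t) e^{iF(t)} dt| ≤ C (max_{[a,b]} G) / √r for an absolute constant C. -/

import Mathlib

open Set Complex
section VdCHelpers
open intervalIntegral MeasureTheory Topology Filter

lemma hdw_ofReal {f : ℝ → ℝ} {u x : ℝ} {s : Set ℝ} (hf : HasDerivWithinAt f u s x) :
    HasDerivWithinAt (fun y => ((f y : ℂ))) (u : ℂ) s x := by
  exact hf.ofReal_comp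

lemma vdc_first (c d lam : ℝ) (hcd : c ≤ d) (hlam : 0 < lam) (f f' f'' : ℝ → ℝ)
    (hf : ∀ t ∈ Icc c d, HasDerivWithinAt f (f' t) (Icc c d) t)
    (hf' : ∀ t ∈ Icc c d, HasDerivWithinAt f' (f'' t) (Icc c d) t)
    (hc2 : ContinuousOn f'' (Icc c d))
    (hpos : ∀ t ∈ Icc c d, 0 ≤ f'' t)
    (hsign : (∀ t ∈ Icc c d, lam ≤ f' t) ∨ (∀ t ∈ Icc c d, f' t ≤ -lam)) :
    ‖∫ t in c..d, Complex.exp (f t * I)‖ ≤ 3 / lam := by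
  have hne : ∀ t ∈ Icc c d, f' t ≠ 0 := by
    intro t ht
    rcases hsign with h | h
    · exact ne_of_gt (lt_of_lt_of_le hlam (h t ht))
    · exact ne_of_lt (lt_of_le_of_lt (h t ht) (by linarith))
  set E : ℝ → ℂ := fun t => Complex.exp (f t * I) with hE
  set g : ℝ → ℂ := fun t => E t * (f'' t) * I / (f' t : ℂ) ^ 2 with hg
  set Φ : ℝ → ℂ := fun t => E t / ((f' t : ℂ) * I) with hΦdef
  have hcontf : ContinuousOn f (Icc c d) := fun t ht => (hf t ht).continuousWithinAt
  have hcontf' : ContinuousOn f' (Icc c d) := fun t ht => (hf' t ht).continuousWithinAt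
  have hcontE : ContinuousOn E (Icc c d) :=
    ((Complex.continuous_ofReal.comp_continuousOn hcontf).mul continuousOn_const).cexp
  have hcontg : ContinuousOn g (Icc c d) := by
    apply ContinuousOn.div
    · exact (hcontE.mul (Complex.continuous_ofReal.comp_continuousOn hc2)).mul continuousOn_const
    · exact (Complex.continuous_ofReal.comp_continuousOn hcontf').pow 2
    · intro t ht
      exact pow_ne_zero 2 (Complex.ofReal_ne_zero.2 (hne t ht))
  have hΦ : ∀ t ∈ Icc c d, HasDerivWithinAt Φ (E t + g t) (Icc c d) t := by
    intro t ht
    have h1 : HasDerivWithinAt (fun y => ((f y : ℂ))) (f' t) (Icc c d) t := hdw_ofReal (hf t ht)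
    have h3 := (h1.mul_const I).cexp
    have h1' : HasDerivWithinAt (fun y => ((f' y : ℂ))) (f'' t) (Icc c d) t := hdw_ofReal (hf' t ht)
    have h2' := h1'.mul_const I
    have ha : ((f' t : ℂ)) ≠ 0 := Complex.ofReal_ne_zero.2 (hne t ht)
    have hden : ((f' t : ℂ)) * I ≠ 0 := mul_ne_zero ha I_ne_zero
    have h4 := h3.div h2' hden
    refine h4.congr_deriv (Eq.symm ?_)
    have hI : (I:ℂ) ≠ 0 := I_ne_zero
    have h3' : (I:ℂ) ^ 3 = -I := by simp [pow_succ, Complex.I_sq]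
    show E t + g t = _
    simp only [hg, hE]
    field_simp
    ring_nf
    rw [Complex.I_sq]; ring
  have hcontΦ : ContinuousOn Φ (Icc c d) := fun t ht => (hΦ t ht).continuousWithinAt
  have hintE : IntervalIntegrable E volume c d := by
    apply ContinuousOn.intervalIntegrable; rwa [uIcc_of_le hcd]
  have hintg : IntervalIntegrable g volume c d := by
    apply ContinuousOn.intervalIntegrable; rwa [uIcc_of_le hcd]
  have key : ∫ t in c..d, (E t + g t) = Φ d - Φ c := by
    apply integral_eq_sub_of_hasDeriv_right_of_le hcd hcontΦ
    · intro x hx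
      exact ((hΦ x (Ioo_subset_Icc_self hx)).hasDerivAt
        (Icc_mem_nhds hx.1 hx.2)).hasDerivWithinAt
    · exact hintE.add hintg
  have hsplit : ∫ t in c..d, E t = Φ d - Φ c - ∫ t in c..d, g t := by
    rw [← key, integral_add hintE hintg]; ring
  -- bound on Φ
  have hΦbound : ∀ t ∈ Icc c d, ‖Φ t‖ ≤ 1 / lam := by
    intro t ht
    have hEt : ‖E t‖ = 1 := Complex.norm_exp_ofReal_mul_I (f t)
    have : ‖Φ t‖ = 1 / |f' t| := by
      simp [hΦdef, hEt, norm_div, Complex.norm_real, Real.norm_eq_abs]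
    rw [this]
    apply one_div_le_one_div_of_le hlam
    rcases hsign with h | h
    · exact le_trans (h t ht) (le_abs_self _)
    · rw [abs_of_neg (by nlinarith [h t ht])]; linarith [h t ht]
  -- bound on ∫ g
  have hFTC2 : ∫ t in c..d, f'' t / (f' t) ^ 2 = 1 / f' c - 1 / f' d := by
    have : ∫ t in c..d, f'' t / (f' t) ^ 2
        = (fun t => -(f' t)⁻¹) d - (fun t => -(f' t)⁻¹) c := by
      apply integral_eq_sub_of_hasDeriv_right_of_le hcd
      · exact (hcontf'.inv₀ hne).neg
      · intro x hx
        have hx' := Ioo_subset_Icc_self hx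
        have h := ((hf' x hx').inv (hne x hx')).neg
        have : -(-f'' x / f' x ^ 2) = f'' x / f' x ^ 2 := by ring
        rw [this] at h
        exact (h.hasDerivAt (Icc_mem_nhds hx.1 hx.2)).hasDerivWithinAt
      · apply ContinuousOn.intervalIntegrable
        rw [uIcc_of_le hcd]
        exact hc2.div (hcontf'.pow 2) (fun t ht => pow_ne_zero 2 (hne t ht))
    rw [this]
    simp only [one_div]
    ring
  have hgnorm : ∀ t ∈ Icc c d, ‖g t‖ = f'' t / (f' t) ^ 2 := by
    intro t ht
    have hEt : ‖E t‖ = 1 := Complex.norm_exp_ofReal_mul_I (f t)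
    simp only [hg, norm_div, norm_mul, hEt, Complex.norm_I, one_mul, mul_one, norm_pow,
      Complex.norm_real, Real.norm_eq_abs]
    rw [_root_.abs_of_nonneg (hpos t ht), _root_.sq_abs]
  have hintgbound : ‖∫ t in c..d, g t‖ ≤ 1 / lam := by
    calc ‖∫ t in c..d, g t‖ ≤ ∫ t in c..d, ‖g t‖ := norm_integral_le_integral_norm hcd
      _ = ∫ t in c..d, f'' t / (f' t) ^ 2 := by
          apply integral_congr
          intro t ht
          rw [uIcc_of_le hcd] at ht
          exact hgnorm t ht
      _ = 1 / f' c - 1 / f' d := hFTC2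
      _ ≤ 1 / lam := by
          clear hgnorm
          rcases hsign with h | h
          · have h1 := h c ⟨le_refl c, hcd⟩
            have h2 := h d ⟨hcd, le_refl d⟩
            have e1 : 1 / f' c ≤ 1 / lam := one_div_le_one_div_of_le hlam h1
            have e2 : 0 < 1 / f' d := one_div_pos.mpr (lt_of_lt_of_le hlam h2)
            linarith
          · have h1 := h c ⟨le_refl c, hcd⟩
            have h2 := h d ⟨hcd, le_refl d⟩
            have e1 : 1 / f' c ≤ 0 := one_div_nonpos.mpr (by linarith)
            have e2 : 1 / (-(f' d)) ≤ 1 / lam := one_div_le_one_div_of_le hlam (by linarith)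
            rw [one_div_neg_eq_neg_one_div] at e2
            linarith
  calc ‖∫ t in c..d, E t‖ = ‖Φ d - Φ c - ∫ t in c..d, g t‖ := by rw [hsplit]
    _ ≤ ‖Φ d - Φ c‖ + ‖∫ t in c..d, g t‖ := norm_sub_le _ _
    _ ≤ (‖Φ d‖ + ‖Φ c‖) + ‖∫ t in c..d, g t‖ := by gcongr; exact norm_sub_le _ _
    _ ≤ (1 / lam + 1 / lam) + 1 / lam := by
        gcongr
        · exact hΦbound d ⟨hcd, le_refl d⟩
        · exact hΦbound c ⟨le_refl c, hcd⟩
    _ ≤ 3 / lam := by rw [div_eq_mul_one_div 3 lam]; linarith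
lemma vdc_second (c d r : ℝ) (hcd : c ≤ d) (hr : 0 < r) (f f' f'' : ℝ → ℝ)
    (hf : ∀ t ∈ Icc c d, HasDerivWithinAt f (f' t) (Icc c d) t)
    (hf' : ∀ t ∈ Icc c d, HasDerivWithinAt f' (f'' t) (Icc c d) t)
    (hc2 : ContinuousOn f'' (Icc c d))
    (hrr : ∀ t ∈ Icc c d, r ≤ f'' t) :
    ‖∫ t in c..d, Complex.exp (f t * I)‖ ≤ 8 / Real.sqrt r := by
  set lam := Real.sqrt r with hlamdef
  have hlam : 0 < lam := Real.sqrt_pos.2 hr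
  have hlam2 : lam ^ 2 = r := Real.sq_sqrt hr.le
  have hpos : ∀ t ∈ Icc c d, 0 ≤ f'' t := fun t ht => le_trans hr.le (hrr t ht)
  have hcontf' : ContinuousOn f' (Icc c d) := fun t ht => (hf' t ht).continuousWithinAt
  have hcontf : ContinuousOn f (Icc c d) := fun t ht => (hf t ht).continuousWithinAt
  have hcontE : ContinuousOn (fun t => Complex.exp (f t * I)) (Icc c d) :=
    ((Complex.continuous_ofReal.comp_continuousOn hcontf).mul continuousOn_const).cexp
  have hint : ∀ u v, u ∈ Icc c d → v ∈ Icc c d →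
      IntervalIntegrable (fun t => Complex.exp (f t * I)) volume u v := fun u v hu hv =>
    (hcontE.mono (uIcc_subset_Icc hu hv)).intervalIntegrable
  have hderivAt : ∀ x ∈ Ioo c d, HasDerivAt f' (f'' x) x := fun x hx =>
    (hf' x (Ioo_subset_Icc_self hx)).hasDerivAt (Icc_mem_nhds hx.1 hx.2)
  have hmono : StrictMonoOn f' (Icc c d) := by
    apply strictMonoOn_of_deriv_pos (convex_Icc c d) hcontf'
    intro x hx
    rw [interior_Icc] at hx
    rw [(hderivAt x hx).deriv]
    exact lt_of_lt_of_le hr (hrr x (Ioo_subset_Icc_self hx))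
  have hMVT : ∀ u v, u ∈ Icc c d → v ∈ Icc c d → u ≤ v → r * (v - u) ≤ f' v - f' u := by
    intro u v hu hv huv
    have hψ : MonotoneOn (fun t => f' t - r * t) (Icc c d) := by
      apply monotoneOn_of_deriv_nonneg (convex_Icc c d)
        (hcontf'.sub (continuousOn_const.mul continuousOn_id))
      · intro x hx
        rw [interior_Icc] at hx
        exact ((hderivAt x hx).sub ((hasDerivAt_id x).const_mul r)).differentiableAt
          |>.differentiableWithinAt
      · intro x hx
        rw [interior_Icc] at hx
        change 0 ≤ deriv (f' - fun y => r * id y) x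
        rw [((hderivAt x hx).sub ((hasDerivAt_id x).const_mul r)).deriv]
        have := hrr x (Ioo_subset_Icc_self hx)
        simp only [mul_one]
        linarith
    have := hψ hu hv huv
    simp only at this
    nlinarith
  -- restriction helper for vdc_first
  have hsub : ∀ u v, u ∈ Icc c d → v ∈ Icc c d → u ≤ v →
      (∀ t ∈ Icc u v, lam ≤ f' t) ∨ (∀ t ∈ Icc u v, f' t ≤ -lam) →
      ‖∫ t in u..v, Complex.exp (f t * I)‖ ≤ 3 / lam := by
    intro u v hu hv huv hsign
    have hUV : Icc u v ⊆ Icc c d := Icc_subset_Icc hu.1 hv.2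
    exact vdc_first u v lam huv hlam f f' f''
      (fun t ht => (hf t (hUV ht)).mono hUV)
      (fun t ht => (hf' t (hUV ht)).mono hUV)
      (hc2.mono hUV) (fun t ht => hpos t (hUV ht)) hsign
  have h38 : (3:ℝ) / lam ≤ 8 / lam := by gcongr; norm_num
  by_cases hA : lam ≤ f' c
  · refine le_trans (hsub c d (left_mem_Icc.2 hcd) (right_mem_Icc.2 hcd) hcd
      (Or.inl fun t ht => le_trans hA ?_)) h38
    exact hmono.monotoneOn (left_mem_Icc.2 hcd) ht ht.1
  by_cases hB : f' d ≤ -lam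
  · refine le_trans (hsub c d (left_mem_Icc.2 hcd) (right_mem_Icc.2 hcd) hcd
      (Or.inr fun t ht => le_trans ?_ hB)) h38
    exact hmono.monotoneOn ht (right_mem_Icc.2 hcd) ht.2
  push_neg at hA hB
  -- find c₀
  obtain ⟨c₀, hc₀mem, hc₀ge, hc₀eqor⟩ :
      ∃ c₀ ∈ Icc c d, -lam ≤ f' c₀ ∧ (c₀ = c ∨ f' c₀ = -lam) := by
    by_cases hc0 : -lam ≤ f' c
    · exact ⟨c, left_mem_Icc.2 hcd, hc0, Or.inl rfl⟩
    · push_neg at hc0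
      obtain ⟨c₀, hc₀mem, hc₀eq⟩ := intermediate_value_Icc hcd hcontf'
        ⟨hc0.le, hB.le⟩
      exact ⟨c₀, hc₀mem, hc₀eq.ge, Or.inr hc₀eq⟩
  obtain ⟨d₀, hd₀mem, hd₀le, hd₀eqor⟩ :
      ∃ d₀ ∈ Icc c d, f' d₀ ≤ lam ∧ (d₀ = d ∨ f' d₀ = lam) := by
    by_cases hd0 : f' d ≤ lam
    · exact ⟨d, right_mem_Icc.2 hcd, hd0, Or.inl rfl⟩
    · push_neg at hd0
      obtain ⟨d₀, hd₀mem, hd₀eq⟩ := intermediate_value_Icc hcd hcontf'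
        ⟨hA.le, hd0.le⟩
      exact ⟨d₀, hd₀mem, hd₀eq.le, Or.inr hd₀eq⟩
  have hc₀d₀ : c₀ ≤ d₀ := by
    rcases hc₀eqor with rfl | heqc
    · exact hd₀mem.1
    rcases hd₀eqor with rfl | heqd
    · exact hc₀mem.2
    by_contra h
    push_neg at h
    have := hmono hd₀mem hc₀mem h
    rw [heqc, heqd] at this
    linarith
  -- three pieces
  have bound1 : ‖∫ t in c..c₀, Complex.exp (f t * I)‖ ≤ 3 / lam := by
    rcases hc₀eqor with rfl | heqc
    · simp [intervalIntegral.integral_same]; positivity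
    · apply hsub c c₀ (left_mem_Icc.2 hcd) hc₀mem hc₀mem.1
      refine Or.inr fun t ht => ?_
      have : f' t ≤ f' c₀ := hmono.monotoneOn ⟨ht.1, le_trans ht.2 hc₀mem.2⟩ hc₀mem ht.2
      linarith [heqc ▸ this]
  have bound2 : ‖∫ t in d₀..d, Complex.exp (f t * I)‖ ≤ 3 / lam := by
    rcases hd₀eqor with rfl | heqd
    · simp [intervalIntegral.integral_same]; positivity
    · apply hsub d₀ d hd₀mem (right_mem_Icc.2 hcd) hd₀mem.2
      refine Or.inl fun t ht => ?_
      have : f' d₀ ≤ f' t := hmono.monotoneOn hd₀mem ⟨le_trans hd₀mem.1 ht.1, ht.2⟩ ht.1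
      linarith [heqd ▸ this]
  have bound3 : ‖∫ t in c₀..d₀, Complex.exp (f t * I)‖ ≤ 2 * lam / r := by
    have hlen : d₀ - c₀ ≤ 2 * lam / r := by
      have h1 := hMVT c₀ d₀ hc₀mem hd₀mem hc₀d₀
      rw [le_div_iff₀ hr]
      nlinarith
    calc ‖∫ t in c₀..d₀, Complex.exp (f t * I)‖ ≤ 1 * |d₀ - c₀| := by
          apply intervalIntegral.norm_integral_le_of_norm_le_const
          intro x hx
          rw [Complex.norm_exp_ofReal_mul_I]
      _ = d₀ - c₀ := by rw [one_mul, _root_.abs_of_nonneg (sub_nonneg.2 hc₀d₀)]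
      _ ≤ 2 * lam / r := hlen
  have hsplitint : ∫ t in c..d, Complex.exp (f t * I) =
      (∫ t in c..c₀, Complex.exp (f t * I)) + (∫ t in c₀..d₀, Complex.exp (f t * I))
        + (∫ t in d₀..d, Complex.exp (f t * I)) := by
    rw [intervalIntegral.integral_add_adjacent_intervals (hint c c₀ (left_mem_Icc.2 hcd) hc₀mem)
      (hint c₀ d₀ hc₀mem hd₀mem)]
    rw [intervalIntegral.integral_add_adjacent_intervals
      (hint c d₀ (left_mem_Icc.2 hcd) hd₀mem) (hint d₀ d hd₀mem (right_mem_Icc.2 hcd))]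
  have h2l : 2 * lam / r = 2 / lam := by
    rw [← hlam2]; field_simp
  calc ‖∫ t in c..d, Complex.exp (f t * I)‖
      ≤ ‖(∫ t in c..c₀, Complex.exp (f t * I)) + (∫ t in c₀..d₀, Complex.exp (f t * I))‖
        + ‖∫ t in d₀..d, Complex.exp (f t * I)‖ := by rw [hsplitint]; exact norm_add_le _ _
    _ ≤ (‖∫ t in c..c₀, Complex.exp (f t * I)‖ + ‖∫ t in c₀..d₀, Complex.exp (f t * I)‖)
        + ‖∫ t in d₀..d, Complex.exp (f t * I)‖ := by gcongr; exact norm_add_le _ _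
    _ ≤ (3 / lam + 2 * lam / r) + 3 / lam := by gcongr
    _ = 8 / lam := by rw [h2l]; ring
lemma vdc_setup (a b r : ℝ) (hab : a < b) (F : ℝ → ℝ)
    (hF : ContDiffOn ℝ 2 F (Icc a b)) (hr : 0 < r)
    (hF2 : ∀ t ∈ Icc a b, r ≤ deriv (deriv F) t) :
    ∀ u v, u ∈ Icc a b → v ∈ Icc a b → u ≤ v →
      ‖∫ t in u..v, Complex.exp (F t * I)‖ ≤ 8 / Real.sqrt r := by
  have hud : UniqueDiffOn ℝ (Icc a b) := uniqueDiffOn_Icc hab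
  set f' := derivWithin F (Icc a b) with hf'def
  set f'' := derivWithin f' (Icc a b) with hf''def
  have hder1 : ∀ t ∈ Icc a b, HasDerivWithinAt F (f' t) (Icc a b) t := fun t ht =>
    ((hF.differentiableOn (by norm_num)) t ht).hasDerivWithinAt
  have hf'C1 : ContDiffOn ℝ 1 f' (Icc a b) := hF.derivWithin hud (by norm_num : (1:WithTop ℕ∞)+1 ≤ 2)
  have hder2 : ∀ t ∈ Icc a b, HasDerivWithinAt f' (f'' t) (Icc a b) t := fun t ht =>
    ((hf'C1.differentiableOn one_ne_zero) t ht).hasDerivWithinAt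
  have hcont2 : ContinuousOn f'' (Icc a b) :=
    (hf'C1.derivWithin hud (by norm_num : (0:WithTop ℕ∞)+1 ≤ 1)).continuousOn
  have hint : ∀ u ∈ Ioo a b, r ≤ f'' u := by
    intro u hu
    have hnhds : Icc a b ∈ 𝓝 u := Icc_mem_nhds hu.1 hu.2
    have e1 : ∀ w ∈ Ioo a b, f' w = deriv F w := fun w hw =>
      derivWithin_of_mem_nhds (Icc_mem_nhds hw.1 hw.2)
    have e2 : f'' u = deriv f' u := derivWithin_of_mem_nhds hnhds
    have e3 : deriv f' u = deriv (deriv F) u := by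
      apply Filter.EventuallyEq.deriv_eq
      exact Filter.eventuallyEq_of_mem (Ioo_mem_nhds hu.1 hu.2) e1
    rw [e2, e3]
    exact hF2 u (Ioo_subset_Icc_self hu)
  have hge : ∀ t ∈ Icc a b, r ≤ f'' t := by
    intro t ht
    have hcl : t ∈ closure (Ioo a b) := by rw [closure_Ioo hab.ne]; exact ht
    haveI : (𝓝[Ioo a b] t).NeBot := mem_closure_iff_nhdsWithin_neBot.1 hcl
    have htend : Filter.Tendsto f'' (𝓝[Ioo a b] t) (𝓝 (f'' t)) :=
      (hcont2 t ht).mono Ioo_subset_Icc_self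
    exact ge_of_tendsto htend (Filter.eventually_inf_principal.2
      (Filter.Eventually.of_forall fun u hu => hint u hu))
  intro u v hu hv huv
  have hUV : Icc u v ⊆ Icc a b := Icc_subset_Icc hu.1 hv.2
  exact vdc_second u v r huv hr F f' f''
    (fun t ht => (hder1 t (hUV ht)).mono hUV)
    (fun t ht => (hder2 t (hUV ht)).mono hUV)
    (hcont2.mono hUV) (fun t ht => hge t (hUV ht))
lemma aeeq_Ioc_of_between {X : Set ℝ} {u v : ℝ} (h1 : Ioo u v ⊆ X) (h2 : X ⊆ Icc u v) :
    X =ᵐ[volume] Ioc u v := by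
  rw [MeasureTheory.ae_eq_set]
  constructor
  · refine measure_mono_null ?_
      (measure_union_null (measure_singleton u) (measure_singleton v))
    intro t ⟨htX, htn⟩
    have ht' := h2 htX
    simp only [mem_Ioc, not_and_or, not_lt, not_le] at htn
    rcases htn with h | h
    · exact Or.inl (le_antisymm h ht'.1)
    · exact Or.inr (le_antisymm ht'.2 (by linarith))
  · refine measure_mono_null ?_ (measure_singleton v)
    intro t ⟨htI, htn⟩
    rcases lt_or_eq_of_le htI.2 with h | h
    · exact absurd (h1 ⟨htI.1, h⟩) htn
    · exact h

lemma vdc_main_pos (a b : ℝ) (hab : a < b) (G F : ℝ → ℝ)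
    (hG : ∀ t ∈ Icc a b, 0 < G t)
    (hmono : MonotoneOn G (Icc a b) ∨ AntitoneOn G (Icc a b))
    (hF : ContDiffOn ℝ 2 F (Icc a b)) (r : ℝ) (hr : 0 < r)
    (hF2 : ∀ t ∈ Icc a b, r ≤ deriv (deriv F) t) :
    ‖∫ t in a..b, (G t : ℂ) * Complex.exp (F t * I)‖ ≤
      8 * sSup (G '' Icc a b) / Real.sqrt r := by
  have hsq : 0 < Real.sqrt r := Real.sqrt_pos.2 hr
  have hmain := vdc_setup a b r hab F hF hr hF2
  -- clamp
  set p : ℝ → ℝ := fun t => max a (min t b) with hp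
  have pmem : ∀ t, p t ∈ Icc a b := fun t =>
    ⟨le_max_left _ _, max_le hab.le (min_le_right _ _)⟩
  have pid : ∀ t ∈ Icc a b, p t = t := by
    intro t ht
    simp only [hp, min_eq_left ht.2, max_eq_right ht.1]
  have pmono : Monotone p := fun x y hxy =>
    max_le_max le_rfl (min_le_min_right _ hxy)
  set Gt : ℝ → ℝ := fun t => G (p t) with hGt
  set Ft : ℝ → ℝ := fun t => F (p t) with hFt
  have hpcont : Continuous p := continuous_const.max (continuous_id.min continuous_const)
  have hFtcont : Continuous Ft := hF.continuousOn.comp_continuous hpcont pmem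
  set E : ℝ → ℂ := fun t => Complex.exp (Ft t * I) with hEdef
  have hEcont : Continuous E :=
    ((Complex.continuous_ofReal.comp hFtcont).mul continuous_const).cexp
  have hEnorm : ∀ t, ‖E t‖ = 1 := fun t => Complex.norm_exp_ofReal_mul_I _
  set M := sSup (G '' Icc a b) with hM
  have hbdd : BddAbove (G '' Icc a b) := by
    rcases hmono with h | h
    · exact ⟨G b, fun y ⟨t, ht, hty⟩ => hty ▸ h ht (right_mem_Icc.2 hab.le) ht.2⟩
    · exact ⟨G a, fun y ⟨t, ht, hty⟩ => hty ▸ h (left_mem_Icc.2 hab.le) ht ht.1⟩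
  have hMle : ∀ t, Gt t ≤ M := fun t => le_csSup hbdd ⟨p t, pmem t, rfl⟩
  have hGtpos : ∀ t, 0 < Gt t := fun t => hG _ (pmem t)
  have hMpos : 0 < M := lt_of_lt_of_le (hGtpos a) (hMle a)
  have hGtmeas : Measurable Gt := by
    rcases hmono with h | h
    · exact Monotone.measurable (fun x y hxy => h (pmem x) (pmem y) (pmono hxy))
    · exact Antitone.measurable (fun x y hxy => h (pmem x) (pmem y) (pmono hxy))
  -- the product function
  set S : Set (ℝ × ℝ) := {q : ℝ × ℝ | q.1 < Gt q.2} with hSdef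
  have hSmeas : MeasurableSet S := measurableSet_lt measurable_fst (hGtmeas.comp measurable_snd)
  set Hf : ℝ × ℝ → ℂ := S.indicator (fun q => E q.2) with hHdef
  haveI hfin1 : IsFiniteMeasure (volume.restrict (Ioc (0:ℝ) M)) :=
    ⟨by rw [Measure.restrict_apply_univ]; exact measure_Ioc_lt_top⟩
  haveI hfin2 : IsFiniteMeasure (volume.restrict (Ioc a b)) :=
    ⟨by rw [Measure.restrict_apply_univ]; exact measure_Ioc_lt_top⟩
  have hHint : Integrable Hf ((volume.restrict (Ioc (0:ℝ) M)).prod (volume.restrict (Ioc a b))) := by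
    apply Integrable.mono' (integrable_const 1)
    · exact (((hEcont.comp continuous_snd).stronglyMeasurable).indicator hSmeas).aestronglyMeasurable
    · apply Filter.Eventually.of_forall
      intro q
      calc ‖Hf q‖ ≤ ‖E q.2‖ := norm_indicator_le_norm_self _ _
        _ = 1 := hEnorm _
  -- layer cake pointwise
  have hlayer : ∀ t, (Gt t : ℂ) * E t = ∫ s in Ioc (0:ℝ) M, Hf (s, t) := by
    intro t
    have h1 : (fun s => Hf (s, t)) = (Iio (Gt t)).indicator (fun _ => E t) := by
      funext s
      simp only [hHdef, Set.indicator_apply, hSdef, mem_setOf_eq, mem_Iio]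
    rw [h1, MeasureTheory.integral_indicator_const _ measurableSet_Iio,
      measureReal_def, Measure.restrict_apply measurableSet_Iio]
    have h2 : Iio (Gt t) ∩ Ioc 0 M = Ioo 0 (Gt t) := by
      ext s
      simp only [mem_inter_iff, mem_Iio, mem_Ioc, mem_Ioo]
      constructor
      · rintro ⟨h3, h4, h5⟩; exact ⟨h4, h3⟩
      · rintro ⟨h4, h3⟩; exact ⟨h3, h4, le_trans h3.le (hMle t)⟩
    rw [h2, Real.volume_Ioo, sub_zero, ENNReal.toReal_ofReal (hGtpos t).le,
      Complex.real_smul]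
  -- inner bound
  have hinner : ∀ s ∈ Ioc (0:ℝ) M, ‖∫ t in Ioc a b, Hf (s, t)‖ ≤ 8 / Real.sqrt r := by
    intro s _
    set T : Set ℝ := {t | s < Gt t} with hTdef
    have hTmeas : MeasurableSet T := measurableSet_lt measurable_const hGtmeas
    have h1 : (fun t => Hf (s, t)) = T.indicator E := by
      funext t
      simp only [hHdef, Set.indicator_apply, hSdef, mem_setOf_eq, hTdef]
    rw [h1, MeasureTheory.integral_indicator hTmeas, Measure.restrict_restrict hTmeas]
    rcases hmono with hmon | hmon
    · -- monotone: T ∩ Ioc a b ≈ Ioc c b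
      have hGtmono : Monotone Gt := fun x y hxy => hmon (pmem x) (pmem y) (pmono hxy)
      set S' : Set ℝ := {t ∈ Icc a b | s < Gt t} ∪ {b} with hS'def
      have hS'ne : S'.Nonempty := ⟨b, Or.inr rfl⟩
      have hS'bdd : BddBelow S' := by
        refine ⟨a, fun x hx => ?_⟩
        rcases hx with hx | hx
        · exact hx.1.1
        · rw [mem_singleton_iff] at hx; rw [hx]; exact hab.le
      set cI := sInf S' with hcI
      have hcImem : cI ∈ Icc a b := by
        constructor
        · exact le_csInf hS'ne (fun x hx => by
            rcases hx with hx | hx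
            · exact hx.1.1
            · rw [mem_singleton_iff] at hx; rw [hx]; exact hab.le)
        · exact csInf_le hS'bdd (Or.inr rfl)
      have claim1 : Ioo cI b ⊆ T ∩ Ioc a b := by
        intro t ⟨ht1, ht2⟩
        obtain ⟨u, hu, hut⟩ := exists_lt_of_csInf_lt hS'ne ht1
        rcases hu with hu | hu
        · exact ⟨lt_of_lt_of_le hu.2 (hGtmono hut.le), lt_of_le_of_lt hu.1.1 hut, ht2.le⟩
        · rw [mem_singleton_iff] at hu; rw [hu] at hut; linarith
      have claim2 : T ∩ Ioc a b ⊆ Icc cI b := by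
        intro t ⟨ht1, ht2⟩
        exact ⟨csInf_le hS'bdd (Or.inl ⟨⟨ht2.1.le, ht2.2⟩, ht1⟩), ht2.2⟩
      have haeeq : (T ∩ Ioc a b : Set ℝ) =ᵐ[volume] (Ioc cI b : Set ℝ) := by
        apply aeeq_Ioc_of_between _ claim2
        intro t ht; exact claim1 ht
      rw [MeasureTheory.setIntegral_congr_set haeeq, ← intervalIntegral.integral_of_le hcImem.2]
      have hcongr : ∫ t in cI..b, E t = ∫ t in cI..b, Complex.exp (F t * I) := by
        apply intervalIntegral.integral_congr
        intro t ht
        rw [uIcc_of_le hcImem.2] at ht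
        have : p t = t := pid t ⟨le_trans hcImem.1 ht.1, ht.2⟩
        simp only [hEdef, hFt, this]
      rw [hcongr]
      exact hmain cI b hcImem (right_mem_Icc.2 hab.le) hcImem.2
    · -- antitone: T ∩ Ioc a b ≈ Ioc a cS
      have hGtmono : Antitone Gt := fun x y hxy => hmon (pmem x) (pmem y) (pmono hxy)
      set S' : Set ℝ := {t ∈ Icc a b | s < Gt t} ∪ {a} with hS'def
      have hS'ne : S'.Nonempty := ⟨a, Or.inr rfl⟩
      have hS'bdd : BddAbove S' := by
        refine ⟨b, fun x hx => ?_⟩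
        rcases hx with hx | hx
        · exact hx.1.2
        · rw [mem_singleton_iff] at hx; rw [hx]; exact hab.le
      set cS := sSup S' with hcS
      have hcSmem : cS ∈ Icc a b := by
        constructor
        · exact le_csSup hS'bdd (Or.inr rfl)
        · exact csSup_le hS'ne (fun x hx => by
            rcases hx with hx | hx
            · exact hx.1.2
            · rw [mem_singleton_iff] at hx; rw [hx]; exact hab.le)
      have claim1 : Ioo a cS ⊆ T ∩ Ioc a b := by
        intro t ⟨ht1, ht2⟩
        obtain ⟨u, hu, hut⟩ := exists_lt_of_lt_csSup hS'ne ht2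
        rcases hu with hu | hu
        · exact ⟨lt_of_lt_of_le hu.2 (hGtmono hut.le), ht1, le_trans hut.le hu.1.2⟩
        · rw [mem_singleton_iff] at hu; rw [hu] at hut; linarith
      have claim2 : T ∩ Ioc a b ⊆ Icc a cS := by
        intro t ⟨ht1, ht2⟩
        exact ⟨ht2.1.le, le_csSup hS'bdd (Or.inl ⟨⟨ht2.1.le, ht2.2⟩, ht1⟩)⟩
      have haeeq : (T ∩ Ioc a b : Set ℝ) =ᵐ[volume] (Ioc a cS : Set ℝ) := by
        apply aeeq_Ioc_of_between _ _
        · intro t ht; exact claim1 ht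
        · intro t ⟨ht1, ht2⟩
          exact ⟨(claim2 ⟨ht1, ht2⟩).1, (claim2 ⟨ht1, ht2⟩).2⟩
      rw [MeasureTheory.setIntegral_congr_set haeeq, ← intervalIntegral.integral_of_le hcSmem.1]
      have hcongr : ∫ t in a..cS, E t = ∫ t in a..cS, Complex.exp (F t * I) := by
        apply intervalIntegral.integral_congr
        intro t ht
        rw [uIcc_of_le hcSmem.1] at ht
        have : p t = t := pid t ⟨ht.1, le_trans ht.2 hcSmem.2⟩
        simp only [hEdef, hFt, this]
      rw [hcongr]
      exact hmain a cS (left_mem_Icc.2 hab.le) hcSmem hcSmem.1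
  -- assemble
  have step1 : ∫ t in a..b, (G t : ℂ) * Complex.exp (F t * I)
      = ∫ t in Ioc a b, (Gt t : ℂ) * E t := by
    rw [intervalIntegral.integral_of_le hab.le]
    apply MeasureTheory.setIntegral_congr_fun measurableSet_Ioc
    intro t ht
    have hpt : p t = t := pid t (mem_Icc_of_Ioc ht)
    simp only [hGt, hEdef, hFt, hpt]
  have step2 : ∫ t in Ioc a b, (Gt t : ℂ) * E t
      = ∫ s in Ioc (0:ℝ) M, ∫ t in Ioc a b, Hf (s, t) := by
    have h1 : ∫ t in Ioc a b, (Gt t : ℂ) * E t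
        = ∫ t in Ioc a b, ∫ s in Ioc (0:ℝ) M, Hf (s, t) := by
      congr 1; funext t; exact hlayer t
    rw [h1]
    exact MeasureTheory.integral_integral_swap hHint.swap
  rw [step1, step2]
  calc ‖∫ s in Ioc (0:ℝ) M, ∫ t in Ioc a b, Hf (s, t)‖
      ≤ (8 / Real.sqrt r) * (volume (Ioc (0:ℝ) M)).toReal := by
        exact MeasureTheory.norm_setIntegral_le_of_norm_le_const measure_Ioc_lt_top hinner
    _ = 8 * M / Real.sqrt r := by
        rw [Real.volume_Ioc, sub_zero, ENNReal.toReal_ofReal hMpos.le]; ring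
end VdCHelpers

/-- Second-derivative test (van der Corput's lemma with a monotonic positive weight). -/
theorem stmt_10 :
    ∃ C > (0:ℝ), ∀ (a b : ℝ), a < b → ∀ (G F : ℝ → ℝ),
      (∀ t ∈ Icc a b, 0 < G t) →
      (MonotoneOn G (Icc a b) ∨ AntitoneOn G (Icc a b)) →
      ContDiffOn ℝ 2 F (Icc a b) →
      ∀ r > (0:ℝ),
        ((∀ t ∈ Icc a b, r ≤ deriv (deriv F) t) ∨
          (∀ t ∈ Icc a b, deriv (deriv F) t ≤ -r)) →
        ‖∫ t in a..b, (G t : ℂ) * Complex.exp (F t * I)‖ ≤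
          C * sSup (G '' Icc a b) / Real.sqrt r := by
  refine ⟨8, by norm_num, ?_⟩
  intro a b hab G F hG hmono hF r hr hcase
  rcases hcase with hpos | hneg
  · exact vdc_main_pos a b hab G F hG hmono hF r hr hpos
  · set F2 : ℝ → ℝ := fun t => -F t with hF2def
    have hcase2 : ∀ t ∈ Icc a b, r ≤ deriv (deriv F2) t := by
      intro t ht
      have e1 : deriv F2 = fun x => -deriv F x := deriv.neg'
      rw [e1, show (fun x => -deriv F x) = -deriv F from rfl, deriv.neg]
      linarith [hneg t ht]
    have hb := vdc_main_pos a b hab G F2 hG hmono hF.neg r hr hcase2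
    have hconj : ∀ t, (starRingEnd ℂ) ((G t : ℂ) * Complex.exp (F t * I))
        = (G t : ℂ) * Complex.exp ((F2 t : ℝ) * I) := by
      intro t
      rw [map_mul, Complex.conj_ofReal, ← Complex.exp_conj, map_mul, Complex.conj_ofReal,
        Complex.conj_I]
      simp only [hF2def, Complex.ofReal_neg]
      ring_nf
    have hint : ∫ t in a..b, (G t : ℂ) * Complex.exp ((F2 t : ℝ) * I)
        = (starRingEnd ℂ) (∫ t in a..b, (G t : ℂ) * Complex.exp (F t * I)) := by
      rw [intervalIntegral.integral_of_le hab.le, intervalIntegral.integral_of_le hab.le,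
        ← integral_conj]
      congr 1
      funext t
      exact (hconj t).symm
    rw [hint] at hb
    rwa [RCLike.norm_conj] at hb
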